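/- For all natural numbers n and all r ≥ 1, m(n,r) ≤ m(n,r−1) · p(n,r). -/

import Mathlib

open Matroid Set Filter Real

namespace PavingEnum

/-- The rank of a matroid: the largest cardinality of a base. -/
noncomputable def mrk {α : Type*} (M : Matroid α) : ℕ :=
  sSup {n : ℕ | ∃ B, M.IsBase B ∧ B.ncard = n}

/-- The rank of a set in a matroid: the largest cardinality of an
independent subset of the set. -/
noncomputable def mrnk {α : Type*} (M : Matroid α) (X : Set α) : ℕ :=
  sSup {n : ℕ | ∃ I, I ⊆ X ∧ M.Indep I ∧ I.ncard = n}

/-- A circuit is a minimal dependent set. -/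
def IsCircuit {α : Type*} (M : Matroid α) (C : Set α) : Prop :=
  M.Dep C ∧ ∀ D, D ⊂ C → M.Indep D

/-- A matroid of rank `r` is paving if every circuit has cardinality at least `r`. -/
def Paving {α : Type*} (M : Matroid α) : Prop :=
  ∀ C, IsCircuit M C → (mrk M : ℕ∞) ≤ C.encard

/-- A matroid is sparse paving if both it and its dual are paving. -/
def SparsePaving {α : Type*} (M : Matroid α) : Prop :=
  Paving M ∧ Paving M✶

/-- `numMatroids n r` : the number of matroids on the ground set `{1, …, n}` of rank `r`. -/
noncomputable def numMatroids (n r : ℕ) : ℕ :=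
  {M : Matroid (Fin n) | M.E = Set.univ ∧ mrk M = r}.ncard

/-- `numPaving n r` : the number of paving matroids on `{1, …, n}` of rank `r`. -/
noncomputable def numPaving (n r : ℕ) : ℕ :=
  {M : Matroid (Fin n) | M.E = Set.univ ∧ mrk M = r ∧ Paving M}.ncard

/-- `numSparsePaving n r` : the number of sparse paving matroids on `{1, …, n}` of rank `r`. -/
noncomputable def numSparsePaving (n r : ℕ) : ℕ :=
  {M : Matroid (Fin n) | M.E = Set.univ ∧ mrk M = r ∧ SparsePaving M}.ncard

end PavingEnum

open PavingEnum

namespace PavingProof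

open Set Matroid

variable {n : ℕ}

/-! ### Finiteness of the type of matroids on `Fin n` -/

instance matroidFinite : Finite (Matroid (Fin n)) := by
  have : Function.Injective
      (fun M : Matroid (Fin n) => (M.E, M.Indep)) := by
    intro M₁ M₂ h
    have hE : M₁.E = M₂.E := congrArg Prod.fst h
    have hI : M₁.Indep = M₂.Indep := congrArg Prod.snd h
    exact Matroid.ext_indep hE (fun ⦃I⦄ _ => by rw [hI])
  exact Finite.of_injective _ this

/-! ### `mrk` basics -/

lemma mrk_eq_of {M : Matroid (Fin n)} {c : ℕ}
    (h₂ : ∀ B, M.IsBase B → B.ncard = c) : mrk M = c := by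
  obtain ⟨B₀, hB₀⟩ := M.exists_isBase
  have hset : {k : ℕ | ∃ B, M.IsBase B ∧ B.ncard = k} = {c} := by
    ext k
    simp only [Set.mem_setOf_eq, Set.mem_singleton_iff]
    constructor
    · rintro ⟨B, hB, rfl⟩; exact h₂ B hB
    · rintro rfl; exact ⟨B₀, hB₀, h₂ B₀ hB₀⟩
  rw [mrk, hset, csSup_singleton]

lemma base_ncard {M : Matroid (Fin n)} {r : ℕ} (hm : mrk M = r) :
    ∀ B, M.IsBase B → B.ncard = r := by
  obtain ⟨B₀, hB₀⟩ := M.exists_isBase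
  have hall : ∀ B, M.IsBase B → B.ncard = B₀.ncard :=
    fun B hB => hB.ncard_eq_ncard_of_isBase hB₀
  have : mrk M = B₀.ncard := mrk_eq_of hall
  intro B hB
  rw [hall B hB, ← this, hm]

lemma indep_ncard_le {M : Matroid (Fin n)} {r : ℕ} (hm : mrk M = r)
    {I : Set (Fin n)} (hI : M.Indep I) : I.ncard ≤ r := by
  obtain ⟨B, hB, hIB⟩ := hI.exists_isBase_superset
  have := base_ncard hm B hB
  calc I.ncard ≤ B.ncard := Set.ncard_le_ncard hIB B.toFinite
  _ = r := this

lemma base_of_indep_ncard {M : Matroid (Fin n)} {r : ℕ} (hm : mrk M = r)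
    {I : Set (Fin n)} (hI : M.Indep I) (hc : I.ncard = r) : M.IsBase I := by
  obtain ⟨B, hB, hIB⟩ := hI.exists_isBase_superset
  have hBc := base_ncard hm B hB
  have : I = B := Set.eq_of_subset_of_ncard_le hIB (by rw [hBc, hc]) B.toFinite
  rwa [this]

/-! ### Truncation -/

noncomputable def trunc (M : Matroid (Fin n)) (k : ℕ) : Matroid (Fin n) :=
  (IndepMatroid.ofFinite (Set.finite_univ)
    (fun I => M.Indep I ∧ I.ncard ≤ k)
    ⟨M.empty_indep, by simp⟩
    (by
      rintro I J ⟨hJ, hJc⟩ hIJ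
      exact ⟨hJ.subset hIJ, le_trans (Set.ncard_le_ncard hIJ J.toFinite) hJc⟩)
    (by
      rintro I J ⟨hI, hIc⟩ ⟨hJ, hJc⟩ hlt
      have henc : I.encard < J.encard := by
        rw [← I.toFinite.cast_ncard_eq, ← J.toFinite.cast_ncard_eq]
        exact_mod_cast hlt
      obtain ⟨e, heJI, hins⟩ := hI.augment hJ henc
      refine ⟨e, heJI.1, heJI.2, hins, ?_⟩
      rw [Set.ncard_insert_of_notMem heJI.2 I.toFinite]
      omega)
    (fun I _ => Set.subset_univ I)).matroid

@[simp] lemma trunc_E (M : Matroid (Fin n)) (k : ℕ) : (trunc M k).E = Set.univ := rfl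

lemma trunc_indep_iff {M : Matroid (Fin n)} {k : ℕ} {I : Set (Fin n)} :
    (trunc M k).Indep I ↔ M.Indep I ∧ I.ncard ≤ k := by
  simp [trunc]

end PavingProof

namespace PavingProof2
open Set Matroid PavingProof

variable {n : ℕ}

/-! ### Combinatorial gadgets -/

/-- `B` is a candidate basis of the truncation of `M` to rank `r-1`. -/
def TB (M : Matroid (Fin n)) (r : ℕ) (B : Set (Fin n)) : Prop :=
  M.Indep B ∧ B.ncard + 1 = r

/-- `S` has rank at most `r-2`. -/
def LowRk (M : Matroid (Fin n)) (r : ℕ) (S : Set (Fin n)) : Prop :=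
  ¬ ∃ B, B ⊆ S ∧ TB M r B

/-- `Y` is closed under closures of small subsets. -/
def Cls (M : Matroid (Fin n)) (r : ℕ) (Y : Set (Fin n)) : Prop :=
  ∀ S, S ⊆ Y → LowRk M r S → M.closure S ⊆ Y

def clstar (M : Matroid (Fin n)) (r : ℕ) (X : Set (Fin n)) : Set (Fin n) :=
  ⋂₀ {Y | X ⊆ Y ∧ Cls M r Y}

/-- The canonical generic generating subset of `H`. -/
def Dblk (M : Matroid (Fin n)) (r : ℕ) (H : Set (Fin n)) : Set (Fin n) :=
  {x | x ∈ H ∧ x ∉ clstar M r {y | y ∈ H ∧ y < x}}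

/-- The family of hyperplanes of `M` spanned by candidate truncation bases. -/
def Hfam (M : Matroid (Fin n)) (r : ℕ) : Set (Set (Fin n)) :=
  {H | ∃ B, TB M r B ∧ H = M.closure B}

def blocks (M : Matroid (Fin n)) (r : ℕ) : Set (Set (Fin n)) :=
  (Dblk M r) '' (Hfam M r)

/-! ### `clstar` basics -/

lemma subset_clstar {M : Matroid (Fin n)} {r : ℕ} {X : Set (Fin n)} : X ⊆ clstar M r X :=
  fun x hx => fun Y hY => hY.1 hx

lemma clstar_min {M : Matroid (Fin n)} {r : ℕ} {X Y : Set (Fin n)}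
    (hXY : X ⊆ Y) (hY : Cls M r Y) : clstar M r X ⊆ Y :=
  sInter_subset_of_mem ⟨hXY, hY⟩

lemma Cls_clstar {M : Matroid (Fin n)} {r : ℕ} {X : Set (Fin n)} : Cls M r (clstar M r X) := by
  intro S hS hSm x hx
  intro Y hY
  exact hY.2 S (hS.trans (clstar_min hY.1 hY.2)) hSm hx

lemma clstar_mono {M : Matroid (Fin n)} {r : ℕ} {X X' : Set (Fin n)} (h : X ⊆ X') :
    clstar M r X ⊆ clstar M r X' :=
  clstar_min (h.trans subset_clstar) Cls_clstar

lemma Cls.clstar_eq {M : Matroid (Fin n)} {r : ℕ} {Y : Set (Fin n)} (hY : Cls M r Y) :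
    clstar M r Y = Y :=
  le_antisymm (clstar_min subset_rfl hY) subset_clstar

lemma Cls_closure {M : Matroid (Fin n)} {r : ℕ} (X : Set (Fin n)) : Cls M r (M.closure X) := by
  intro S hS _
  have := M.closure_subset_closure hS
  rwa [M.closure_closure] at this

lemma clstar_subset_closure {M : Matroid (Fin n)} {r : ℕ} {X : Set (Fin n)}
    (hE : M.E = Set.univ) : clstar M r X ⊆ M.closure X :=
  clstar_min (M.subset_closure X (by rw [hE]; exact Set.subset_univ X)) (Cls_closure X)

/-! ### Minimal dependent subsets -/

lemma exists_min_dep (M : Matroid (Fin n)) :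
    ∀ (k : ℕ) (S : Set (Fin n)), S.ncard ≤ k → M.Dep S →
      ∃ C, C ⊆ S ∧ M.Dep C ∧ ∀ C', C' ⊂ C → M.Indep C' := by
  intro k
  induction k with
  | zero =>
    intro S hk hS
    have : S = ∅ := by
      rw [← Set.ncard_eq_zero S.toFinite]; omega
    rw [this] at hS
    exact absurd M.empty_indep hS.not_indep
  | succ k IH =>
    intro S hk hS
    by_cases h : ∀ C', C' ⊂ S → M.Indep C'
    · exact ⟨S, subset_rfl, hS, h⟩
    · push_neg at h
      obtain ⟨C', hC'S, hC'⟩ := h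
      have hC'E : C' ⊆ M.E := hC'S.subset.trans hS.subset_ground
      have hdep : M.Dep C' := ⟨hC', hC'E⟩
      have hlt : C'.ncard < S.ncard := Set.ncard_lt_ncard hC'S S.toFinite
      obtain ⟨C, hCC', hC⟩ := IH C' (by omega) hdep
      exact ⟨C, hCC'.trans hC'S.subset, hC⟩

/-! ### Subsets of `Dblk` of size `r-1` are independent -/

lemma TB_of_subset_Dblk {M : Matroid (Fin n)} {r : ℕ} (hE : M.E = Set.univ)
    {H S : Set (Fin n)} (hS : S ⊆ Dblk M r H) (hcard : S.ncard + 1 = r) :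
    M.Indep S := by
  by_contra hind
  have hdep : M.Dep S := ⟨hind, by rw [hE]; exact Set.subset_univ S⟩
  obtain ⟨C, hCS, hCdep, hCmin⟩ := exists_min_dep M S.ncard S le_rfl hdep
  have hCne : C.Nonempty := by
    rcases Set.eq_empty_or_nonempty C with h | h
    · rw [h] at hCdep; exact absurd M.empty_indep hCdep.not_indep
    · exact h
  obtain ⟨x, hxC, hxmax⟩ := Set.exists_max_image C id C.toFinite hCne
  have hCx : C \ {x} ⊂ C := Set.sdiff_singleton_ssubset.mpr hxC
  have hCxind : M.Indep (C \ {x}) := hCmin _ hCx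
  have hxcl : x ∈ M.closure (C \ {x}) := by
    rw [hCxind.mem_closure_iff]
    left
    rwa [Set.insert_diff_singleton, Set.insert_eq_of_mem hxC]
  have hCxcard : (C \ {x}).ncard + 2 ≤ r := by
    have h1 : C.ncard ≤ S.ncard := Set.ncard_le_ncard hCS S.toFinite
    have h2 : (C \ {x}).ncard = C.ncard - 1 := Set.ncard_diff_singleton_of_mem hxC
    have h3 : 1 ≤ C.ncard := Nat.one_le_iff_ne_zero.mpr (by rw [ne_eq, Set.ncard_eq_zero C.toFinite]; exact hCne.ne_empty)
    omega
  have hsmall : LowRk M r (C \ {x}) := by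
    rintro ⟨B, hBsub, hBind, hBcard⟩
    have : B.ncard ≤ (C \ {x}).ncard := Set.ncard_le_ncard hBsub (C \ {x}).toFinite
    omega
  have hCxsub : C \ {x} ⊆ {y | y ∈ H ∧ y < x} := by
    rintro y ⟨hyC, hyx⟩
    refine ⟨(hS (hCS hyC)).1, ?_⟩
    have := hxmax y hyC
    simp only [id] at this
    exact lt_of_le_of_ne this (by simpa using hyx)
  have hxin : x ∈ clstar M r {y | y ∈ H ∧ y < x} := by
    have hsub : C \ {x} ⊆ clstar M r {y | y ∈ H ∧ y < x} :=
      hCxsub.trans subset_clstar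
    exact Cls_clstar (C \ {x}) hsub hsmall hxcl
  exact (hS (hCS hxC)).2 hxin

/-! ### `clstar (Dblk H) = H` for closed `H` -/

lemma clstar_Dblk {M : Matroid (Fin n)} {r : ℕ} {H : Set (Fin n)} (hH : Cls M r H) :
    clstar M r (Dblk M r H) = H := by
  refine le_antisymm (clstar_min (fun x hx => hx.1) hH) ?_
  have key : ∀ (m : ℕ) (x : Fin n), x.val = m → x ∈ H → x ∈ clstar M r (Dblk M r H) := by
    intro m
    induction m using Nat.strong_induction_on with
    | _ m IH =>
      intro x hxm hxH
      by_cases hxD : x ∈ Dblk M r H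
      · exact subset_clstar hxD
      · have hx' : x ∈ clstar M r {y | y ∈ H ∧ y < x} := by
          by_contra hc
          exact hxD ⟨hxH, hc⟩
        have hsub : {y | y ∈ H ∧ y < x} ⊆ clstar M r (Dblk M r H) := by
          rintro y ⟨hyH, hyx⟩
          exact IH y.val (by rw [← hxm]; exact Fin.lt_def.mp hyx) y rfl hyH
        exact clstar_min hsub Cls_clstar hx'
  exact fun x hx => key x.val x rfl hx

end PavingProof2

namespace PavingProof3
open Set Matroid PavingProof PavingProof2

variable {n : ℕ}

section Invariance

variable {M₁ M₂ : Matroid (Fin n)} {r : ℕ}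

lemma TB_eq (hag : ∀ I : Set (Fin n), I.ncard + 1 ≤ r → (M₁.Indep I ↔ M₂.Indep I)) :
    TB M₁ r = TB M₂ r := by
  funext B
  unfold TB
  by_cases hB : B.ncard + 1 = r
  · rw [hag B (le_of_eq hB)]
  · simp only [hB, and_false]

lemma Small_eq (hag : ∀ I : Set (Fin n), I.ncard + 1 ≤ r → (M₁.Indep I ↔ M₂.Indep I)) :
    LowRk M₁ r = LowRk M₂ r := by
  unfold LowRk
  rw [TB_eq hag]

lemma closure_small_eq (hE₁ : M₁.E = Set.univ) (hE₂ : M₂.E = Set.univ) (hr : 1 ≤ r)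
    (hag : ∀ I : Set (Fin n), I.ncard + 1 ≤ r → (M₁.Indep I ↔ M₂.Indep I))
    {S : Set (Fin n)} (hSm : LowRk M₁ r S) : M₁.closure S = M₂.closure S := by
  obtain ⟨I, hI⟩ := M₁.exists_isBasis S (by rw [hE₁]; exact Set.subset_univ S)
  have hIS : I ⊆ S := hI.subset
  have hIind : M₁.Indep I := hI.indep
  -- card bound
  have hIcard : I.ncard + 2 ≤ r := by
    have h1 : I.ncard + 1 ≠ r := by
      intro h
      exact hSm ⟨I, hIS, hIind, h⟩
    have h2 : I.ncard + 1 ≤ r := by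
      by_contra h
      push_neg at h
      obtain ⟨B, hBI, hBcard⟩ := Set.exists_subset_card_eq (s := I) (n := r - 1) (by omega)
      exact hSm ⟨B, hBI.trans hIS, hIind.subset hBI, by omega⟩
    omega
  have hI₂ind : M₂.Indep I := (hag I (by omega)).mp hIind
  -- smallness for M₂
  have hSm₂ : LowRk M₂ r S := by rw [← Small_eq hag]; exact hSm
  -- I is an M₂-basis of S
  have hI₂ : M₂.IsBasis I S := by
    refine hI₂ind.isBasis_of_maximal_subset hIS ?_ (by rw [hE₂]; exact Set.subset_univ S)
    intro J hJ hIJ hJS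
    have hJcard : J.ncard + 1 ≤ r := by
      by_contra h
      push_neg at h
      obtain ⟨B, hBJ, hBcard⟩ := Set.exists_subset_card_eq (s := J) (n := r - 1) (by omega)
      exact hSm₂ ⟨B, hBJ.trans hJS, hJ.subset hBJ, by omega⟩
    have hJ₁ : M₁.Indep J := (hag J hJcard).mpr hJ
    have := hI.eq_of_subset_indep hJ₁ hIJ hJS
    rw [← this]
  rw [← hI.closure_eq_closure, ← hI₂.closure_eq_closure]
  ext x
  rw [hIind.mem_closure_iff, hI₂ind.mem_closure_iff]
  have hxE : (insert x I).ncard + 1 ≤ r := by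
    have := Set.ncard_insert_le x I
    omega
  constructor
  · rintro (hdep | hx)
    · left
      refine ⟨fun hind => hdep.not_indep ((hag _ hxE).mpr hind), ?_⟩
      rw [hE₂]; exact Set.subset_univ _
    · right; exact hx
  · rintro (hdep | hx)
    · left
      refine ⟨fun hind => hdep.not_indep ((hag _ hxE).mp hind), ?_⟩
      rw [hE₁]; exact Set.subset_univ _
    · right; exact hx

lemma Cls_eq (hE₁ : M₁.E = Set.univ) (hE₂ : M₂.E = Set.univ) (hr : 1 ≤ r)
    (hag : ∀ I : Set (Fin n), I.ncard + 1 ≤ r → (M₁.Indep I ↔ M₂.Indep I)) :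
    Cls M₁ r = Cls M₂ r := by
  funext Y
  unfold Cls
  refine propext ⟨fun h S hSY hSm => ?_, fun h S hSY hSm => ?_⟩
  · rw [← closure_small_eq hE₁ hE₂ hr hag (by rw [Small_eq hag]; exact hSm)]
    exact h S hSY (by rw [Small_eq hag]; exact hSm)
  · rw [closure_small_eq hE₁ hE₂ hr hag hSm]
    exact h S hSY (by rw [← Small_eq hag]; exact hSm)

lemma clstar_eq (hE₁ : M₁.E = Set.univ) (hE₂ : M₂.E = Set.univ) (hr : 1 ≤ r)
    (hag : ∀ I : Set (Fin n), I.ncard + 1 ≤ r → (M₁.Indep I ↔ M₂.Indep I)) :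
    clstar M₁ r = clstar M₂ r := by
  unfold clstar
  rw [Cls_eq hE₁ hE₂ hr hag]

lemma Dblk_eq (hE₁ : M₁.E = Set.univ) (hE₂ : M₂.E = Set.univ) (hr : 1 ≤ r)
    (hag : ∀ I : Set (Fin n), I.ncard + 1 ≤ r → (M₁.Indep I ↔ M₂.Indep I)) :
    Dblk M₁ r = Dblk M₂ r := by
  unfold Dblk
  rw [clstar_eq hE₁ hE₂ hr hag]

end Invariance

section SingleM

variable {M : Matroid (Fin n)} {r : ℕ}

lemma closure_TB_ne_univ (hE : M.E = Set.univ) (hm : mrk M = r) {B : Set (Fin n)}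
    (hB : TB M r B) : M.closure B ≠ Set.univ := by
  intro h
  have hbase : M.IsBase B := hB.1.isBase_of_ground_subset_closure (by rw [h, hE])
  have := base_ncard hm B hbase
  have := hB.2
  omega

/-- Exactly-once covering: a `TB` set contained in a member determines the member. -/
lemma closure_TB_eq (hE : M.E = Set.univ) (hm : mrk M = r) {B B' : Set (Fin n)}
    (hB : TB M r B) (hB' : TB M r B') (hsub : B' ⊆ M.closure B) :
    M.closure B' = M.closure B := by
  have hne := closure_TB_ne_univ hE hm hB
  refine le_antisymm (M.closure_subset_closure_of_subset_closure hsub) ?_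
  intro z hz
  by_cases hzB' : z ∈ M.closure B'
  · exact hzB'
  exfalso
  have hzE : z ∈ M.E := M.mem_ground_of_mem_closure hz
  have hzB'' : z ∉ B' := fun h => hzB' (M.subset_closure B' hB'.1.subset_ground h)
  have hins : M.Indep (insert z B') := by
    rw [hB'.1.insert_indep_iff_of_notMem hzB'']
    exact ⟨hzE, hzB'⟩
  have hcard : (insert z B').ncard = r := by
    rw [Set.ncard_insert_of_notMem hzB'' B'.toFinite]
    exact hB'.2
  have hbase : M.IsBase (insert z B') := base_of_indep_ncard hm hins hcard
  have hsub2 : insert z B' ⊆ M.closure B := Set.insert_subset hz hsub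
  have : M.E ⊆ M.closure B := by
    rw [← hbase.closure_eq]
    have := M.closure_subset_closure_of_subset_closure hsub2
    exact this
  exact hne (le_antisymm (by rw [← hE]; exact M.closure_subset_ground B) (by rw [← hE]; exact this))

/-- An independent set inside the closure of `X` has at most `|X|` elements. -/
lemma indep_ncard_le_ncard_of_subset_closure (hE : M.E = Set.univ) {B X : Set (Fin n)}
    (hB : M.Indep B) (hBX : B ⊆ M.closure X) : B.ncard ≤ X.ncard := by
  have hXE : X ⊆ M.E := by rw [hE]; exact Set.subset_univ X
  obtain ⟨I, hI⟩ := M.exists_isBasis X hXE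
  have hclosure : M.closure X = M.closure I := hI.closure_eq_closure.symm
  have hY : B ∪ I ⊆ M.closure I := by
    refine Set.union_subset ?_ (M.subset_closure I hI.indep.subset_ground)
    rw [← hclosure]; exact hBX
  have hIbasis : M.IsBasis I (B ∪ I) :=
    hI.indep.isBasis_of_subset_of_subset_closure Set.subset_union_right hY
  obtain ⟨J, hJ, hBJ⟩ := hB.subset_isBasis_of_subset (Set.subset_union_left (t := I))
    (hY.trans (M.closure_subset_ground I))
  have hencard : J.encard = I.encard := hJ.encard_eq_encard hIbasis
  have h1 : B.ncard ≤ J.ncard := Set.ncard_le_ncard hBJ J.toFinite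
  have h2 : J.ncard = I.ncard := by
    rw [Set.ncard_def, hencard, ← Set.ncard_def]
  have h3 : I.ncard ≤ X.ncard := Set.ncard_le_ncard hI.subset X.toFinite
  omega

end SingleM

end PavingProof3

namespace PavingProof4
open Set Matroid PavingProof PavingProof2 PavingProof3

variable {n : ℕ}

def Good (r : ℕ) (Ds : Set (Set (Fin n))) : Prop :=
  1 ≤ r ∧ ∀ D₁ ∈ Ds, ∀ D₂ ∈ Ds, ∀ S : Set (Fin n),
    S ⊆ D₁ → S ⊆ D₂ → S.ncard + 1 = r → D₁ = D₂

def PavIndep (r : ℕ) (Ds : Set (Set (Fin n))) (I : Set (Fin n)) : Prop :=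
  I.ncard ≤ r ∧ ∀ D ∈ Ds, I ⊆ D → I.ncard + 1 ≤ r

noncomputable def pavOf (r : ℕ) (Ds : Set (Set (Fin n))) : Matroid (Fin n) := by
  classical
  exact if h : Good r Ds then
    (IndepMatroid.ofFinite Set.finite_univ (PavIndep r Ds)
      (⟨by simp, fun D _ _ => by simpa using h.1⟩)
      (by
        rintro I J ⟨hJc, hJD⟩ hIJ
        refine ⟨le_trans (Set.ncard_le_ncard hIJ J.toFinite) hJc, ?_⟩
        intro D hD hID
        by_cases heq : I.ncard = J.ncard
        · have hIJ' : I = J :=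
            Set.eq_of_subset_of_ncard_le hIJ (le_of_eq heq.symm) J.toFinite
          subst hIJ'
          exact hJD D hD hID
        · have : I.ncard < J.ncard :=
            lt_of_le_of_ne (Set.ncard_le_ncard hIJ J.toFinite) heq
          omega)
      (by
        rintro I J ⟨hIc, hID⟩ ⟨hJc, hJD⟩ hlt
        by_cases hsm : I.ncard + 2 ≤ r
        · obtain ⟨x, hxJ, hxI⟩ := Set.exists_mem_notMem_of_ncard_lt_ncard hlt I.toFinite
          refine ⟨x, hxJ, hxI, ?_, ?_⟩
          · rw [Set.ncard_insert_of_notMem hxI I.toFinite]; omega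
          · intro D _ _
            rw [Set.ncard_insert_of_notMem hxI I.toFinite]; omega
        · have hIr : I.ncard + 1 = r := by omega
          by_cases hD₀ : ∃ D₀ ∈ Ds, I ⊆ D₀
          · obtain ⟨D₀, hD₀s, hID₀⟩ := hD₀
            have hJD₀ : ¬ J ⊆ D₀ := by
              intro hsub
              have := hJD D₀ hD₀s hsub
              omega
            obtain ⟨x, hxJ, hxD₀⟩ := Set.not_subset.mp hJD₀
            have hxI : x ∉ I := fun hx => hxD₀ (hID₀ hx)
            refine ⟨x, hxJ, hxI, ?_, ?_⟩
            · rw [Set.ncard_insert_of_notMem hxI I.toFinite]; omega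
            · intro D hD hsub
              exfalso
              have hIDsub : I ⊆ D := (Set.subset_insert x I).trans hsub
              have : D = D₀ := h.2 D hD D₀ hD₀s I hIDsub hID₀ hIr
              exact hxD₀ (this ▸ hsub (Set.mem_insert x I))
          · push_neg at hD₀
            obtain ⟨x, hxJ, hxI⟩ := Set.exists_mem_notMem_of_ncard_lt_ncard hlt I.toFinite
            refine ⟨x, hxJ, hxI, ?_, ?_⟩
            · rw [Set.ncard_insert_of_notMem hxI I.toFinite]; omega
            · intro D hD hsub
              exfalso
              exact hD₀ D hD ((Set.subset_insert x I).trans hsub))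
      (fun I _ => Set.subset_univ I)).matroid
  else Matroid.freeOn Set.univ

lemma pavOf_E (r : ℕ) (Ds : Set (Set (Fin n))) : (pavOf r Ds).E = Set.univ := by
  unfold pavOf
  split <;> rfl

lemma pavOf_indep_iff {r : ℕ} {Ds : Set (Set (Fin n))} (h : Good r Ds) {I : Set (Fin n)} :
    (pavOf r Ds).Indep I ↔ PavIndep r Ds I := by
  unfold pavOf
  rw [dif_pos h]
  exact Iff.rfl

/-- Big blocks are determined by the paving matroid. -/
lemma big_subset_block {r : ℕ} {Ds₁ Ds₂ : Set (Set (Fin n))} (h₂ : Good r Ds₂)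
    (hIeq : ∀ I, PavIndep r Ds₁ I ↔ PavIndep r Ds₂ I)
    {D : Set (Fin n)} (hD : D ∈ Ds₁) (hbig : r ≤ D.ncard) : ∃ D' ∈ Ds₂, D ⊆ D' := by
  obtain ⟨S₀, hS₀D, hS₀c⟩ := Set.exists_subset_card_eq (s := D) (n := r - 1) (by omega)
  have hS₀c' : S₀.ncard + 1 = r := by have := h₂.1; omega
  have key : ∀ z ∈ D, z ∉ S₀ → ∃ D' ∈ Ds₂, insert z S₀ ⊆ D' := by
    intro z hzD hzS₀
    have hcard : (insert z S₀).ncard = r := by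
      rw [Set.ncard_insert_of_notMem hzS₀ S₀.toFinite]; omega
    have hnind : ¬ PavIndep r Ds₁ (insert z S₀) := by
      rintro ⟨-, h2⟩
      have := h2 D hD (Set.insert_subset hzD hS₀D)
      omega
    rw [hIeq] at hnind
    unfold PavIndep at hnind
    push_neg at hnind
    obtain ⟨D', hD', hsub, -⟩ := hnind (le_of_eq hcard)
    exact ⟨D', hD', hsub⟩
  have hne : ∃ z₀, z₀ ∈ D ∧ z₀ ∉ S₀ := by
    have : S₀.ncard < D.ncard := by omega
    obtain ⟨z, hz, hz'⟩ := Set.exists_mem_notMem_of_ncard_lt_ncard this S₀.toFinite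
    exact ⟨z, hz, hz'⟩
  obtain ⟨z₀, hz₀D, hz₀S₀⟩ := hne
  obtain ⟨D', hD', hsub'⟩ := key z₀ hz₀D hz₀S₀
  refine ⟨D', hD', ?_⟩
  intro d hd
  by_cases hdS₀ : d ∈ S₀
  · exact hsub' (Set.mem_insert_of_mem _ hdS₀)
  · obtain ⟨D'', hD'', hsub''⟩ := key d hd hdS₀
    have : D'' = D' := h₂.2 D'' hD'' D' hD' S₀
      ((Set.subset_insert d S₀).trans hsub'') ((Set.subset_insert z₀ S₀).trans hsub') hS₀c'
    exact this ▸ hsub'' (Set.mem_insert d S₀)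

lemma big_blocks_eq {r : ℕ} {Ds₁ Ds₂ : Set (Set (Fin n))} (h₁ : Good r Ds₁) (h₂ : Good r Ds₂)
    (hIeq : ∀ I, PavIndep r Ds₁ I ↔ PavIndep r Ds₂ I)
    {D : Set (Fin n)} (hD : D ∈ Ds₁) (hbig : r ≤ D.ncard) : D ∈ Ds₂ := by
  obtain ⟨D', hD', hsub⟩ := big_subset_block h₂ hIeq hD hbig
  have hbig' : r ≤ D'.ncard := le_trans hbig (Set.ncard_le_ncard hsub D'.toFinite)
  obtain ⟨D'', hD'', hsub'⟩ := big_subset_block h₁ (fun I => (hIeq I).symm) hD' hbig'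
  obtain ⟨S₀, hS₀D, hS₀c⟩ := Set.exists_subset_card_eq (s := D) (n := r - 1) (by omega)
  have hS₀c' : S₀.ncard + 1 = r := by have := h₁.1; omega
  have hDD'' : D = D'' := h₁.2 D hD D'' hD'' S₀ hS₀D (hS₀D.trans (hsub.trans hsub')) hS₀c'
  have : D' = D := le_antisymm (hDD'' ▸ hsub') hsub
  exact this ▸ hD'

end PavingProof4

namespace PavingProof5
open Set Matroid PavingProof PavingProof2 PavingProof3 PavingProof4

variable {n : ℕ} {M : Matroid (Fin n)} {r : ℕ}

lemma Dblk_subset (M : Matroid (Fin n)) (r : ℕ) (H : Set (Fin n)) : Dblk M r H ⊆ H :=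
  fun _ hx => hx.1

lemma good_blocks (hE : M.E = Set.univ) (hm : mrk M = r) (hr : 1 ≤ r) :
    Good r (blocks M r) := by
  refine ⟨hr, ?_⟩
  rintro D₁ ⟨H₁, hH₁, rfl⟩ D₂ ⟨H₂, hH₂, rfl⟩ S hS₁ hS₂ hScard
  obtain ⟨B₁, hB₁, rfl⟩ := hH₁
  obtain ⟨B₂, hB₂, rfl⟩ := hH₂
  have hSind : M.Indep S := TB_of_subset_Dblk hE hS₁ hScard
  have hTBS : TB M r S := ⟨hSind, hScard⟩
  have e₁ : M.closure S = M.closure B₁ :=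
    closure_TB_eq hE hm hB₁ hTBS (hS₁.trans (Dblk_subset M r _))
  have e₂ : M.closure S = M.closure B₂ :=
    closure_TB_eq hE hm hB₂ hTBS (hS₂.trans (Dblk_subset M r _))
  rw [e₁.symm.trans e₂]

lemma block_subset_ne_univ (hE : M.E = Set.univ) (hm : mrk M = r)
    {D : Set (Fin n)} (hD : D ∈ blocks M r) :
    ∃ H, Cls M r H ∧ D = Dblk M r H ∧ H ∈ Hfam M r ∧ D ⊆ H ∧ H ≠ Set.univ := by
  obtain ⟨H, hH, rfl⟩ := hD
  obtain ⟨B, hB, rfl⟩ := hH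
  exact ⟨M.closure B, Cls_closure B, rfl, ⟨B, hB, rfl⟩, Dblk_subset M r _,
    closure_TB_ne_univ hE hm hB⟩

lemma Mbase_pav_indep (hE : M.E = Set.univ) (hm : mrk M = r) (hr : 1 ≤ r)
    {X : Set (Fin n)} (hX : M.IsBase X) :
    PavIndep r (blocks M r) X := by
  have hXc : X.ncard = r := base_ncard hm X hX
  refine ⟨le_of_eq hXc, ?_⟩
  intro D hD hsub
  exfalso
  obtain ⟨H, -, -, hHfam, hDH, hHne⟩ := block_subset_ne_univ hE hm hD
  obtain ⟨B, hB, rfl⟩ := hHfam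
  have h1 : M.E ⊆ M.closure (M.closure B) := by
    rw [← hX.closure_eq]
    exact M.closure_subset_closure  (hsub.trans hDH)
  rw [M.closure_closure] at h1
  exact hHne (le_antisymm (by rw [← hE]; exact M.closure_subset_ground B) (by rw [← hE]; exact h1))

lemma r_le_n (hm : mrk M = r) : r ≤ n := by
  obtain ⟨B₀, hB₀⟩ := M.exists_isBase
  have h1 : B₀.ncard = r := base_ncard hm B₀ hB₀
  have h2 : B₀.ncard ≤ (Set.univ : Set (Fin n)).ncard :=
    Set.ncard_le_ncard (Set.subset_univ B₀) (Set.finite_univ)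
  rwa [h1, Set.ncard_univ, Nat.card_eq_fintype_card, Fintype.card_fin] at h2

lemma base_pav_ncard (hE : M.E = Set.univ) (hm : mrk M = r) (hr : 1 ≤ r) :
    ∀ B, (pavOf r (blocks M r)).IsBase B → B.ncard = r := by
  have hGood := good_blocks hE hm hr
  intro B hB
  have hBi := hB.indep
  rw [pavOf_indep_iff hGood] at hBi
  obtain ⟨hc, hblk⟩ := hBi
  by_contra hne
  have hlt : B.ncard < r := lt_of_le_of_ne hc hne
  -- find an extension
  have hext : ∃ x, x ∉ B ∧ PavIndep r (blocks M r) (insert x B) := by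
    by_cases hBD : ∃ D₀ ∈ blocks M r, B ⊆ D₀
    · obtain ⟨D₀, hD₀, hBD₀⟩ := hBD
      obtain ⟨H₀, -, hD₀eq, -, hDH₀, hH₀ne⟩ := block_subset_ne_univ hE hm hD₀
      obtain ⟨x, hxH₀⟩ : ∃ x, x ∉ H₀ := by
        by_contra hcon
        push_neg at hcon
        exact hH₀ne (Set.eq_univ_of_forall hcon)
      have hxB : x ∉ B := fun h => hxH₀ (hDH₀ (hBD₀ h))
      refine ⟨x, hxB, ⟨by rw [Set.ncard_insert_of_notMem hxB B.toFinite]; omega, ?_⟩⟩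
      intro D hD hsub
      rw [Set.ncard_insert_of_notMem hxB B.toFinite]
      by_cases hcc : B.ncard + 1 = r
      · exfalso
        have hBD' : B ⊆ D := (Set.subset_insert x B).trans hsub
        have : D = D₀ := hGood.2 D hD D₀ hD₀ B hBD' hBD₀ hcc
        exact hxH₀ (hDH₀ (this ▸ hsub (Set.mem_insert x B)))
      · omega
    · push_neg at hBD
      have hBne : B ≠ Set.univ := by
        intro h
        rw [h, Set.ncard_univ, Nat.card_eq_fintype_card, Fintype.card_fin] at hlt
        exact absurd (r_le_n hm) (by omega)
      obtain ⟨x, hxB⟩ : ∃ x, x ∉ B := by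
        by_contra hcon
        push_neg at hcon
        exact hBne (Set.eq_univ_of_forall hcon)
      refine ⟨x, hxB, ⟨by rw [Set.ncard_insert_of_notMem hxB B.toFinite]; omega, ?_⟩⟩
      intro D hD hsub
      exfalso
      exact hBD D hD ((Set.subset_insert x B).trans hsub)
  obtain ⟨x, hxB, hins⟩ := hext
  have hins' : (pavOf r (blocks M r)).Indep (insert x B) := (pavOf_indep_iff hGood).mpr hins
  have := hB.eq_of_subset_indep hins' (Set.subset_insert x B)
  exact hxB (this ▸ Set.mem_insert x B)

lemma mrk_pav (hE : M.E = Set.univ) (hm : mrk M = r) (hr : 1 ≤ r) :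
    mrk (pavOf r (blocks M r)) = r :=
  mrk_eq_of (base_pav_ncard hE hm hr)

lemma pav_paving (hE : M.E = Set.univ) (hm : mrk M = r) (hr : 1 ≤ r) :
    Paving (pavOf r (blocks M r)) := by
  have hGood := good_blocks hE hm hr
  intro C hC
  obtain ⟨hdep, -⟩ := hC
  have hCr : r ≤ C.ncard := by
    by_contra hcon
    push_neg at hcon
    have : PavIndep r (blocks M r) C := ⟨by omega, fun D _ _ => by omega⟩
    exact hdep.not_indep ((pavOf_indep_iff hGood).mpr this)
  rw [mrk_pav hE hm hr]
  calc ((r : ℕ) : ℕ∞) ≤ (C.ncard : ℕ∞) := by exact_mod_cast hCr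
  _ = C.encard := C.toFinite.cast_ncard_eq

lemma trunc_base_ncard (hm : mrk M = r) (hr : 1 ≤ r) :
    ∀ B, (trunc M (r - 1)).IsBase B → B.ncard = r - 1 := by
  intro B hB
  have hBi := hB.indep
  rw [trunc_indep_iff] at hBi
  obtain ⟨hind, hc⟩ := hBi
  by_contra hne
  have hlt : B.ncard < r - 1 := lt_of_le_of_ne hc hne
  obtain ⟨B₂, hB₂, hBB₂⟩ := hind.exists_isBase_superset
  have hB₂c : B₂.ncard = r := base_ncard hm B₂ hB₂
  obtain ⟨x, hx₂, hxB⟩ := Set.exists_mem_notMem_of_ncard_lt_ncard (s := B) (t := B₂) (by omega) B.toFinite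
  have hins : M.Indep (insert x B) := hB₂.indep.subset (Set.insert_subset hx₂ hBB₂)
  have hins' : (trunc M (r - 1)).Indep (insert x B) := by
    rw [trunc_indep_iff]
    exact ⟨hins, by rw [Set.ncard_insert_of_notMem hxB B.toFinite]; omega⟩
  have := hB.eq_of_subset_indep hins' (Set.subset_insert x B)
  exact hxB (this ▸ Set.mem_insert x B)

lemma mrk_trunc (hm : mrk M = r) (hr : 1 ≤ r) :
    mrk (trunc M (r - 1)) = r - 1 :=
  mrk_eq_of (trunc_base_ncard hm hr)

/-- Recovery of rank-`r` independence from the truncation data and `Hfam`. -/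
lemma indep_r_iff (hE : M.E = Set.univ) (hm : mrk M = r) (hr : 1 ≤ r)
    {I : Set (Fin n)} (hc : I.ncard = r) :
    M.Indep I ↔ ∃ x ∈ I, TB M r (I \ {x}) ∧ ∀ H ∈ Hfam M r, I \ {x} ⊆ H → x ∉ H := by
  constructor
  · intro hI
    have hIne : I.Nonempty := Set.nonempty_of_ncard_ne_zero (by omega)
    obtain ⟨x, hx⟩ := hIne
    have hTB : TB M r (I \ {x}) := by
      refine ⟨hI.subset Set.diff_subset, ?_⟩
      rw [Set.ncard_diff_singleton_of_mem hx]
      omega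
    refine ⟨x, hx, hTB, ?_⟩
    rintro H ⟨B₂, hB₂, rfl⟩ hsub hxH
    have hcl : M.closure (I \ {x}) = M.closure B₂ := closure_TB_eq hE hm hB₂ hTB hsub
    rw [← hcl] at hxH
    exact (hI.notMem_closure_sdiff_of_mem hx) hxH
  · rintro ⟨x, hx, hTB, hall⟩
    have hH₀ : M.closure (I \ {x}) ∈ Hfam M r := ⟨_, hTB, rfl⟩
    have hsub : I \ {x} ⊆ M.closure (I \ {x}) :=
      M.subset_closure _ hTB.1.subset_ground
    have hxn : x ∉ M.closure (I \ {x}) := hall _ hH₀ hsub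
    have hins : M.Indep (insert x (I \ {x})) := by
      rw [hTB.1.insert_indep_iff_of_notMem (by simp)]
      exact ⟨by rw [hE]; trivial, hxn⟩
    rwa [Set.insert_diff_singleton, Set.insert_eq_of_mem hx] at hins

end PavingProof5

namespace PavingProof6
open Set Matroid PavingProof PavingProof2 PavingProof3 PavingProof4 PavingProof5

variable {n : ℕ} {M₁ M₂ : Matroid (Fin n)} {r : ℕ}

lemma Hfam_step (hE₁ : M₁.E = Set.univ) (hE₂ : M₂.E = Set.univ)
    (hm₂ : mrk M₂ = r) (hr : 1 ≤ r)
    (hag : ∀ I : Set (Fin n), I.ncard + 1 ≤ r → (M₁.Indep I ↔ M₂.Indep I))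
    (hbb : ∀ D ∈ blocks M₂ r, r ≤ D.ncard → D ∈ blocks M₁ r)
    {K : Set (Fin n)} (hK₂ : K ∈ Hfam M₂ r) (hK₁ : K ∉ Hfam M₁ r) :
    ∃ H, H ∈ Hfam M₁ r ∧ H ∉ Hfam M₂ r ∧ K ⊂ H := by
  obtain ⟨B₀, hB₀, rfl⟩ := hK₂
  set K := M₂.closure B₀ with hKdef
  have hK₂' : K ∈ Hfam M₂ r := ⟨B₀, hB₀, rfl⟩
  have hClsK : Cls M₂ r K := Cls_closure B₀
  have hγ : clstar M₂ r (Dblk M₂ r K) = K := clstar_Dblk hClsK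
  set D := Dblk M₂ r K with hDdef
  have hDblocks₂ : D ∈ blocks M₂ r := ⟨K, hK₂', rfl⟩
  have hnotbig : ¬ r ≤ D.ncard := by
    intro hbig
    obtain ⟨H₁, hH₁, hDH₁⟩ := hbb D hDblocks₂ hbig
    obtain ⟨B₁, hB₁, hH₁eq⟩ := hH₁
    have hClsH₁ : Cls M₁ r H₁ := hH₁eq ▸ Cls_closure B₁
    have hrec : clstar M₁ r (Dblk M₁ r H₁) = H₁ := clstar_Dblk hClsH₁
    rw [Dblk_eq hE₁ hE₂ hr hag] at hDH₁
    rw [Dblk_eq hE₁ hE₂ hr hag, clstar_eq hE₁ hE₂ hr hag, hDH₁, hγ] at hrec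
    exact hK₁ (hrec ▸ ⟨B₁, hB₁, hH₁eq⟩)
  have hB₀K : B₀ ⊆ K := M₂.subset_closure B₀ hB₀.1.subset_ground
  have hKcl : K ⊆ M₂.closure D := by
    conv_lhs => rw [← hγ]
    exact clstar_subset_closure hE₂
  have hge : (r - 1 : ℕ) ≤ D.ncard := by
    have h1 := indep_ncard_le_ncard_of_subset_closure hE₂ hB₀.1 (hB₀K.trans hKcl)
    have h2 := hB₀.2
    omega
  have hDcard : D.ncard + 1 = r := by omega
  have hDind₂ : M₂.Indep D := TB_of_subset_Dblk hE₂ (subset_refl _) hDcard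
  have hTB₂ : TB M₂ r D := ⟨hDind₂, hDcard⟩
  have hTB₁ : TB M₁ r D := by rw [TB_eq hag]; exact hTB₂
  have hclD₂ : M₂.closure D = K :=
    closure_TB_eq hE₂ hm₂ hB₀ hTB₂ (Dblk_subset M₂ r K)
  set H := M₁.closure D with hHdef
  have hHfam₁ : H ∈ Hfam M₁ r := ⟨D, hTB₁, rfl⟩
  have hKH : K ⊆ H := by
    have h1 : clstar M₁ r D ⊆ H :=
      clstar_min (M₁.subset_closure D (by rw [hE₁]; exact Set.subset_univ D)) (Cls_closure D)
    have h2 : K = clstar M₁ r D := by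
      rw [clstar_eq hE₁ hE₂ hr hag]
      exact hγ.symm
    rw [h2]
    exact h1
  have hKne : K ≠ H := fun h => hK₁ (h ▸ hHfam₁)
  have hH₂ : H ∉ Hfam M₂ r := by
    rintro ⟨B₃, hB₃, hHB₃⟩
    have hsubD : D ⊆ M₂.closure B₃ := by
      rw [← hHB₃]
      exact M₁.subset_closure D (by rw [hE₁]; exact Set.subset_univ D)
    have heq := closure_TB_eq hE₂ hm₂ hB₃ hTB₂ hsubD
    rw [hclD₂] at heq
    exact hKne (heq.trans hHB₃.symm)
  exact ⟨H, hHfam₁, hH₂, ssubset_of_subset_of_ne hKH hKne⟩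

lemma Hfam_eq_of (hE₁ : M₁.E = Set.univ) (hE₂ : M₂.E = Set.univ)
    (hm₁ : mrk M₁ = r) (hm₂ : mrk M₂ = r) (hr : 1 ≤ r)
    (hag : ∀ I : Set (Fin n), I.ncard + 1 ≤ r → (M₁.Indep I ↔ M₂.Indep I))
    (hbb₂₁ : ∀ D ∈ blocks M₂ r, r ≤ D.ncard → D ∈ blocks M₁ r)
    (hbb₁₂ : ∀ D ∈ blocks M₁ r, r ≤ D.ncard → D ∈ blocks M₂ r) :
    Hfam M₁ r = Hfam M₂ r := by
  by_contra hne
  have hag' : ∀ I : Set (Fin n), I.ncard + 1 ≤ r → (M₂.Indep I ↔ M₁.Indep I) :=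
    fun I h => (hag I h).symm
  have hUne : ((Hfam M₁ r \ Hfam M₂ r) ∪ (Hfam M₂ r \ Hfam M₁ r)).Nonempty := by
    have h' : ¬ (Hfam M₁ r ⊆ Hfam M₂ r ∧ Hfam M₂ r ⊆ Hfam M₁ r) :=
      fun ⟨h1, h2⟩ => hne (le_antisymm h1 h2)
    rcases not_and_or.mp h' with h | h
    · obtain ⟨K, hK, hK'⟩ := Set.not_subset.mp h
      exact ⟨K, Or.inl ⟨hK, hK'⟩⟩
    · obtain ⟨K, hK, hK'⟩ := Set.not_subset.mp h
      exact ⟨K, Or.inr ⟨hK, hK'⟩⟩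
  obtain ⟨K, hKU, hKmax⟩ := Set.exists_max_image _ (fun A => A.ncard)
    (Set.toFinite _) hUne
  rcases hKU with ⟨hKa, hKb⟩ | ⟨hKa, hKb⟩
  · obtain ⟨H, hHf, hHf', hKH⟩ := Hfam_step hE₂ hE₁ hm₁ hr hag' hbb₁₂ hKa hKb
    have hHU : H ∈ (Hfam M₁ r \ Hfam M₂ r) ∪ (Hfam M₂ r \ Hfam M₁ r) :=
      Or.inr ⟨hHf, hHf'⟩
    have h1 := hKmax H hHU
    have h2 := Set.ncard_lt_ncard hKH H.toFinite
    omega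
  · obtain ⟨H, hHf, hHf', hKH⟩ := Hfam_step hE₁ hE₂ hm₂ hr hag hbb₂₁ hKa hKb
    have hHU : H ∈ (Hfam M₁ r \ Hfam M₂ r) ∪ (Hfam M₂ r \ Hfam M₁ r) :=
      Or.inl ⟨hHf, hHf'⟩
    have h1 := hKmax H hHU
    have h2 := Set.ncard_lt_ncard hKH H.toFinite
    omega

lemma matroid_eq (hE₁ : M₁.E = Set.univ) (hE₂ : M₂.E = Set.univ)
    (hm₁ : mrk M₁ = r) (hm₂ : mrk M₂ = r) (hr : 1 ≤ r)
    (hag : ∀ I : Set (Fin n), I.ncard + 1 ≤ r → (M₁.Indep I ↔ M₂.Indep I))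
    (hHfam : Hfam M₁ r = Hfam M₂ r) : M₁ = M₂ := by
  refine Matroid.ext_indep (hE₁.trans hE₂.symm) (fun ⦃I⦄ _ => ?_)
  rcases lt_trichotomy I.ncard r with hlt | heq | hgt
  · exact hag I (by omega)
  · rw [indep_r_iff hE₁ hm₁ hr heq, indep_r_iff hE₂ hm₂ hr heq, TB_eq hag, hHfam]
  · constructor <;> intro h <;> exfalso
    · exact absurd (indep_ncard_le hm₁ h) (by omega)
    · exact absurd (indep_ncard_le hm₂ h) (by omega)

lemma ncard_prod {α β : Type*} [Finite α] [Finite β] (s : Set α) (t : Set β) :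
    (s ×ˢ t).ncard = s.ncard * t.ncard := by
  rw [← Nat.card_coe_set_eq, ← Nat.card_coe_set_eq, ← Nat.card_coe_set_eq, ← Nat.card_prod]
  exact Nat.card_congr (Equiv.Set.prod s t)

end PavingProof6

/-- For all n and r ≥ 1, m(n,r) ≤ m(n,r−1) · p(n,r). -/
theorem numMatroids_le_mul (n r : ℕ) (hr : 1 ≤ r) :
    numMatroids n r ≤ numMatroids n (r - 1) * numPaving n r := by
  classical
  set Sr : Set (Matroid (Fin n)) := {M | M.E = Set.univ ∧ mrk M = r} with hSrdef
  set Sr' : Set (Matroid (Fin n)) := {M | M.E = Set.univ ∧ mrk M = r - 1} with hSr'def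
  set SP : Set (Matroid (Fin n)) := {M | M.E = Set.univ ∧ mrk M = r ∧ Paving M} with hSPdef
  set f : Matroid (Fin n) → Matroid (Fin n) × Matroid (Fin n) :=
    fun M => (PavingProof.trunc M (r - 1), PavingProof4.pavOf r (PavingProof2.blocks M r))
    with hfdef
  have hmaps : ∀ M ∈ Sr, f M ∈ Sr' ×ˢ SP := by
    rintro M ⟨hE, hm⟩
    refine ⟨⟨?_, ?_⟩, ?_, ?_, ?_⟩
    · exact PavingProof.trunc_E M (r - 1)
    · exact PavingProof5.mrk_trunc hm hr
    · exact PavingProof4.pavOf_E r _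
    · exact PavingProof5.mrk_pav hE hm hr
    · exact PavingProof5.pav_paving hE hm hr
  have hinj : Set.InjOn f Sr := by
    rintro M₁ ⟨hE₁, hm₁⟩ M₂ ⟨hE₂, hm₂⟩ hf
    have htr : PavingProof.trunc M₁ (r - 1) = PavingProof.trunc M₂ (r - 1) :=
      congrArg Prod.fst hf
    have hpv : PavingProof4.pavOf r (PavingProof2.blocks M₁ r)
        = PavingProof4.pavOf r (PavingProof2.blocks M₂ r) := congrArg Prod.snd hf
    have hag : ∀ I : Set (Fin n), I.ncard + 1 ≤ r → (M₁.Indep I ↔ M₂.Indep I) := by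
      intro I hI
      have hIc : I.ncard ≤ r - 1 := by omega
      have h1 : (PavingProof.trunc M₁ (r - 1)).Indep I
          ↔ (PavingProof.trunc M₂ (r - 1)).Indep I := by rw [htr]
      rw [PavingProof.trunc_indep_iff, PavingProof.trunc_indep_iff] at h1
      constructor
      · intro h; exact (h1.mp ⟨h, hIc⟩).1
      · intro h; exact (h1.mpr ⟨h, hIc⟩).1
    have hGood₁ := PavingProof5.good_blocks hE₁ hm₁ hr
    have hGood₂ := PavingProof5.good_blocks hE₂ hm₂ hr
    have hIeq : ∀ I, PavingProof4.PavIndep r (PavingProof2.blocks M₁ r) I ↔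
        PavingProof4.PavIndep r (PavingProof2.blocks M₂ r) I := by
      intro I
      rw [← PavingProof4.pavOf_indep_iff hGood₁, ← PavingProof4.pavOf_indep_iff hGood₂, hpv]
    have hbb₁₂ : ∀ D ∈ PavingProof2.blocks M₁ r, r ≤ D.ncard → D ∈ PavingProof2.blocks M₂ r :=
      fun D hD hb => PavingProof4.big_blocks_eq hGood₁ hGood₂ hIeq hD hb
    have hbb₂₁ : ∀ D ∈ PavingProof2.blocks M₂ r, r ≤ D.ncard → D ∈ PavingProof2.blocks M₁ r :=
      fun D hD hb => PavingProof4.big_blocks_eq hGood₂ hGood₁ (fun I => (hIeq I).symm) hD hb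
    have hHfam := PavingProof6.Hfam_eq_of hE₁ hE₂ hm₁ hm₂ hr hag hbb₂₁ hbb₁₂
    exact PavingProof6.matroid_eq hE₁ hE₂ hm₁ hm₂ hr hag hHfam
  have himg : f '' Sr ⊆ Sr' ×ˢ SP := by
    rintro y ⟨M, hM, rfl⟩
    exact hmaps M hM
  calc numMatroids n r = Sr.ncard := rfl
    _ = (f '' Sr).ncard := (Set.ncard_image_of_injOn hinj).symm
    _ ≤ (Sr' ×ˢ SP).ncard := Set.ncard_le_ncard himg (Set.toFinite _)
    _ = Sr'.ncard * SP.ncard := PavingProof6.ncard_prod _ _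
    _ = numMatroids n (r - 1) * numPaving n r := rfl
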